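/- arXiv:1105.5938 — 3 statements merged into one kernel-verified Lean document; each statement's English description precedes it below -/
import Mathlib

section
/- Let f : [a,b] → ℝ be bounded. Then the indefinite lower Darboux integral F_*(x) = lower∫_a^x f(y) dy and the indefinite upper Darboux integral F^*(x) = upper∫_a^x f(y) dy are generalized primitives of f; in particular every bounded function on [a,b] has a generalized primitive. -/
noncomputable section

/-- A partition of `[a, b]` given by points `x 0 = a < x 1 < ⋯ < x n = b`. -/
def IsPartition (a b : ℝ) (n : ℕ) (x : ℕ → ℝ) : Prop :=
  x 0 = a ∧ x n = b ∧ ∀ i < n, x i < x (i + 1)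

/-- The lower Darboux sum of `f` associated to the partition points `x 0, …, x n`. -/
noncomputable def lowerSum (f : ℝ → ℝ) (n : ℕ) (x : ℕ → ℝ) : ℝ :=
  ∑ i ∈ Finset.range n, sInf (f '' Set.Icc (x i) (x (i + 1))) * (x (i + 1) - x i)

/-- The upper Darboux sum of `f` associated to the partition points `x 0, …, x n`. -/
noncomputable def upperSum (f : ℝ → ℝ) (n : ℕ) (x : ℕ → ℝ) : ℝ :=
  ∑ i ∈ Finset.range n, sSup (f '' Set.Icc (x i) (x (i + 1))) * (x (i + 1) - x i)

/-- The lower Darboux integral of `f` over `[a, b]`: the supremum of the lower sums. -/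
noncomputable def lowerDarboux (f : ℝ → ℝ) (a b : ℝ) : ℝ :=
  sSup {s : ℝ | ∃ n x, IsPartition a b n x ∧ s = lowerSum f n x}

/-- The upper Darboux integral of `f` over `[a, b]`: the infimum of the upper sums. -/
noncomputable def upperDarboux (f : ℝ → ℝ) (a b : ℝ) : ℝ :=
  sInf {s : ℝ | ∃ n x, IsPartition a b n x ∧ s = upperSum f n x}

/-- `f` is bounded on the set `s`. -/
def BoundedOn (f : ℝ → ℝ) (s : Set ℝ) : Prop := ∃ M : ℝ, ∀ x ∈ s, |f x| ≤ M

/-- `f` is Riemann integrable on `[a, b]`: it is bounded there and its lower and upper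
Darboux integrals coincide. -/
def RiemannIntegrableOn (f : ℝ → ℝ) (a b : ℝ) : Prop :=
  BoundedOn f (Set.Icc a b) ∧ lowerDarboux f a b = upperDarboux f a b

/-- The oriented Riemann integral `∫_u^v f`: for `u ≤ v` it is the (lower) Darboux integral
over `[u, v]` (equal to the upper one when `f` is Riemann integrable, and `0` when `u = v`),
and for `v < u` it is minus the integral over `[v, u]`. -/
noncomputable def riemannIntegral (f : ℝ → ℝ) (u v : ℝ) : ℝ :=
  if u ≤ v then lowerDarboux f u v else -lowerDarboux f v u

/-- `F` is a generalized primitive of `f` on `[a, b]`: for all `x < y` in `[a, b]`,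
`inf_{[x,y]} f ≤ (F y - F x)/(y - x) ≤ sup_{[x,y]} f`. -/
def IsGenPrimitive (a b : ℝ) (f F : ℝ → ℝ) : Prop :=
  ∀ x ∈ Set.Icc a b, ∀ y ∈ Set.Icc a b, x < y →
    sInf (f '' Set.Icc x y) ≤ (F y - F x) / (y - x) ∧
      (F y - F x) / (y - x) ≤ sSup (f '' Set.Icc x y)

namespace DarbouxAux

open Set Finset

variable {a b : ℝ} {f : ℝ → ℝ}

lemma part_mono {n : ℕ} {z : ℕ → ℝ} (h : ∀ i < n, z i < z (i + 1)) :
    ∀ i j, i ≤ j → j ≤ n → z i ≤ z j := by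
  intro i j
  induction j with
  | zero => intro hij _; obtain rfl := Nat.le_zero.mp hij; exact le_rfl
  | succ j ih =>
    intro hij hjn
    rcases Nat.eq_or_lt_of_le hij with h1 | h1
    · rw [h1]
    · exact le_trans (ih (by omega) (by omega)) (le_of_lt (h j (by omega)))

lemma bddB (hf : BoundedOn f (Set.Icc a b)) {u v : ℝ} (hs : Set.Icc u v ⊆ Set.Icc a b) :
    BddBelow (f '' Set.Icc u v) := by
  obtain ⟨M, hM⟩ := hf
  exact ⟨-M, by rintro t ⟨w, hw, rfl⟩; have := hM w (hs hw); rw [abs_le] at this; exact this.1⟩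

lemma bddA (hf : BoundedOn f (Set.Icc a b)) {u v : ℝ} (hs : Set.Icc u v ⊆ Set.Icc a b) :
    BddAbove (f '' Set.Icc u v) := by
  obtain ⟨M, hM⟩ := hf
  exact ⟨M, by rintro t ⟨w, hw, rfl⟩; have := hM w (hs hw); rw [abs_le] at this; exact this.2⟩

lemma exists_partition {u v : ℝ} (huv : u ≤ v) : ∃ n x, IsPartition u v n x := by
  rcases eq_or_lt_of_le huv with h | h
  · exact ⟨0, fun _ => u, rfl, h, fun i hi => (Nat.not_lt_zero i hi).elim⟩
  · refine ⟨1, fun i => if i = 0 then u else v, by simp, by simp, ?_⟩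
    intro i hi
    interval_cases i
    simpa using h

lemma lowerSum_bounds (hf : BoundedOn f (Set.Icc a b)) {u v : ℝ}
    (hs : Set.Icc u v ⊆ Set.Icc a b) {n : ℕ} {z : ℕ → ℝ} (hP : IsPartition u v n z) :
    sInf (f '' Set.Icc u v) * (v - u) ≤ lowerSum f n z ∧
      lowerSum f n z ≤ sSup (f '' Set.Icc u v) * (v - u) := by
  obtain ⟨h0, hn, hlt⟩ := hP
  have hmono := part_mono hlt
  have hmem : ∀ i ≤ n, z i ∈ Set.Icc u v := fun i hi =>
    ⟨h0 ▸ hmono 0 i (Nat.zero_le _) hi, hn ▸ hmono i n hi le_rfl⟩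
  have hsub : ∀ i < n, Set.Icc (z i) (z (i + 1)) ⊆ Set.Icc u v := by
    intro i hi t ht
    exact ⟨le_trans (hmem i (le_of_lt hi)).1 ht.1, le_trans ht.2 (hmem (i+1) hi).2⟩
  have hne : ∀ i < n, (f '' Set.Icc (z i) (z (i + 1))).Nonempty :=
    fun i hi => ⟨f (z i), ⟨z i, ⟨le_refl _, le_of_lt (hlt i hi)⟩, rfl⟩⟩
  have key : ∀ i < n,
      sInf (f '' Set.Icc u v) * (z (i+1) - z i) ≤
        sInf (f '' Set.Icc (z i) (z (i+1))) * (z (i+1) - z i) ∧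
      sInf (f '' Set.Icc (z i) (z (i+1))) * (z (i+1) - z i) ≤
        sSup (f '' Set.Icc u v) * (z (i+1) - z i) := by
    intro i hi
    have hΔ : (0:ℝ) ≤ z (i+1) - z i := by linarith [hlt i hi]
    constructor
    · exact mul_le_mul_of_nonneg_right
        (csInf_le_csInf (bddB hf hs) (hne i hi) (Set.image_mono (f := f) (hsub i hi))) hΔ
    · refine mul_le_mul_of_nonneg_right ?_ hΔ
      have h1 : sInf (f '' Set.Icc (z i) (z (i+1))) ≤ f (z i) :=
        csInf_le ((bddB hf hs).mono (Set.image_mono (f := f) (hsub i hi)))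
          ⟨z i, ⟨le_refl _, le_of_lt (hlt i hi)⟩, rfl⟩
      have h2 : f (z i) ≤ sSup (f '' Set.Icc u v) :=
        le_csSup (bddA hf hs) ⟨z i, hmem i (le_of_lt hi), rfl⟩
      linarith
  have htel : ∑ i ∈ Finset.range n, (z (i+1) - z i) = v - u := by
    rw [Finset.sum_range_sub z n, h0, hn]
  constructor
  · calc sInf (f '' Set.Icc u v) * (v - u)
        = ∑ i ∈ Finset.range n, sInf (f '' Set.Icc u v) * (z (i+1) - z i) := by
          rw [← Finset.mul_sum, htel]
      _ ≤ lowerSum f n z := Finset.sum_le_sum fun i hi =>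
          (key i (Finset.mem_range.mp hi)).1
  · calc lowerSum f n z
        ≤ ∑ i ∈ Finset.range n, sSup (f '' Set.Icc u v) * (z (i+1) - z i) :=
          Finset.sum_le_sum fun i hi => (key i (Finset.mem_range.mp hi)).2
      _ = sSup (f '' Set.Icc u v) * (v - u) := by rw [← Finset.mul_sum, htel]

def lowSet (f : ℝ → ℝ) (u v : ℝ) : Set ℝ :=
  {s : ℝ | ∃ n x, IsPartition u v n x ∧ s = lowerSum f n x}

lemma lowerDarboux_eq_sSup (u v : ℝ) : lowerDarboux f u v = sSup (lowSet f u v) := rfl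

lemma lowSet_nonempty {u v : ℝ} (huv : u ≤ v) : (lowSet f u v).Nonempty := by
  obtain ⟨n, x, hP⟩ := exists_partition huv
  exact ⟨lowerSum f n x, n, x, hP, rfl⟩

lemma lowSet_bddAbove (hf : BoundedOn f (Set.Icc a b)) {u v : ℝ} (huv : u ≤ v)
    (hs : Set.Icc u v ⊆ Set.Icc a b) : BddAbove (lowSet f u v) := by
  refine ⟨sSup (f '' Set.Icc u v) * (v - u), ?_⟩
  rintro s ⟨n, x, hP, rfl⟩
  exact (lowerSum_bounds hf hs hP).2

lemma lowerSum_le_lowerDarboux (hf : BoundedOn f (Set.Icc a b)) {u v : ℝ} (huv : u ≤ v)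
    (hs : Set.Icc u v ⊆ Set.Icc a b) {n : ℕ} {z : ℕ → ℝ} (hP : IsPartition u v n z) :
    lowerSum f n z ≤ lowerDarboux f u v := by
  rw [lowerDarboux_eq_sSup]
  exact le_csSup (lowSet_bddAbove hf huv hs) ⟨n, z, hP, rfl⟩

lemma lower_extend (hf : BoundedOn f (Set.Icc a b)) {x y : ℝ} (hax : a ≤ x) (hxy : x < y)
    (hyb : y ≤ b) :
    lowerDarboux f a x + sInf (f '' Set.Icc x y) * (y - x) ≤ lowerDarboux f a y := by
  have hsy : Set.Icc a y ⊆ Set.Icc a b := Set.Icc_subset_Icc le_rfl hyb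
  have key : ∀ s ∈ lowSet f a x,
      s ≤ lowerDarboux f a y - sInf (f '' Set.Icc x y) * (y - x) := by
    rintro s ⟨n, z, ⟨h0, hn, hlt⟩, rfl⟩
    set z' : ℕ → ℝ := fun i => if i ≤ n then z i else y with hz'
    have hP' : IsPartition a y (n + 1) z' := by
      refine ⟨by simp [hz', h0], by simp [hz'], ?_⟩
      intro i hi
      rcases Nat.lt_or_ge i n with h | h
      · simp only [hz', if_pos (le_of_lt h), if_pos (Nat.succ_le_of_lt h)]
        exact hlt i h
      · have hin : i = n := by omega
        rw [hin]
        simp only [hz', if_pos (le_refl n), if_neg (by omega : ¬ n + 1 ≤ n)]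
        rw [hn]; exact hxy
    have hsum : lowerSum f (n + 1) z' = lowerSum f n z + sInf (f '' Set.Icc x y) * (y - x) := by
      unfold lowerSum
      rw [Finset.sum_range_succ]
      congr 1
      · refine Finset.sum_congr rfl fun i hi => ?_
        have hi' := Finset.mem_range.mp hi
        simp only [hz', if_pos (le_of_lt hi'), if_pos (Nat.succ_le_of_lt hi')]
      · simp only [hz', if_pos (le_refl n), if_neg (by omega : ¬ n + 1 ≤ n), hn]
    have hle : lowerSum f (n + 1) z' ≤ lowerDarboux f a y :=
      lowerSum_le_lowerDarboux hf (by linarith) hsy hP'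
    rw [hsum] at hle
    linarith
  have h := csSup_le (lowSet_nonempty hax) key
  rw [← lowerDarboux_eq_sSup] at h
  linarith

lemma lower_split (hf : BoundedOn f (Set.Icc a b)) {x y : ℝ} (hax : a ≤ x) (hxy : x < y)
    (hyb : y ≤ b) :
    lowerDarboux f a y ≤ lowerDarboux f a x + sSup (f '' Set.Icc x y) * (y - x) := by
  classical
  have hsx : Set.Icc a x ⊆ Set.Icc a b := Set.Icc_subset_Icc le_rfl (by linarith)
  set M := sSup (f '' Set.Icc x y) with hM
  have hay : (lowSet f a y).Nonempty := lowSet_nonempty (by linarith)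
  refine le_trans (le_of_eq (lowerDarboux_eq_sSup a y)) (csSup_le hay ?_)
  rintro s ⟨n, z, ⟨h0, hn, hlt⟩, rfl⟩
  have hmono := part_mono hlt
  have hsuby : Set.Icc a y ⊆ Set.Icc a b := Set.Icc_subset_Icc le_rfl hyb
  have hmemab : ∀ i ≤ n, z i ∈ Set.Icc a b := fun i hi =>
    hsuby ⟨h0 ▸ hmono 0 i (Nat.zero_le _) hi, hn ▸ hmono i n hi le_rfl⟩
  have hfM : ∀ t, t ∈ Set.Icc x y → f t ≤ M :=
    fun t ht => le_csSup (bddA hf (Set.Icc_subset_Icc (by linarith) hyb)) ⟨t, ht, rfl⟩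
  set k := Nat.findGreatest (fun k => z k ≤ x) n with hk
  have hzk : z k ≤ x :=
    Nat.findGreatest_spec (P := fun k => z k ≤ x) (Nat.zero_le n) ((le_of_eq h0).trans hax)
  have hkn : k < n := by
    rcases Nat.lt_or_ge k n with h | h
    · exact h
    · exfalso
      have hkeq : k = n := le_antisymm (Nat.findGreatest_le n) h
      rw [hkeq, hn] at hzk; linarith
  have hxzk1 : x < z (k + 1) := by
    by_contra h
    push_neg at h
    exact Nat.findGreatest_is_greatest (Nat.lt_succ_self k) hkn h
  have hbb : ∀ i < n, BddBelow (f '' Set.Icc (z i) (z (i+1))) := by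
    intro i hi
    refine (bddB hf Set.Subset.rfl).mono (Set.image_mono (f := f) ?_)
    exact Set.Icc_subset_Icc (hmemab i (le_of_lt hi)).1 (hmemab (i+1) hi).2
  have hinfM : ∀ i, k ≤ i → i < n → sInf (f '' Set.Icc (z i) (z (i+1))) ≤ M := by
    intro i hki hin
    have h1 : sInf (f '' Set.Icc (z i) (z (i+1))) ≤ f (z (i+1)) :=
      csInf_le (hbb i hin) ⟨z (i+1), ⟨le_of_lt (hlt i hin), le_refl _⟩, rfl⟩
    refine le_trans h1 (hfM _ ⟨?_, hn ▸ hmono (i+1) n hin le_rfl⟩)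
    exact le_trans (le_of_lt hxzk1) (hmono (k+1) (i+1) (by omega) hin)
  have htel : ∀ m₁ m₂, m₁ ≤ m₂ → ∑ i ∈ Finset.Ico m₁ m₂, (z (i+1) - z i) = z m₂ - z m₁ := by
    intro m₁ m₂ h
    rw [Finset.sum_Ico_eq_sub _ h, Finset.sum_range_sub z, Finset.sum_range_sub z]
    ring
  have hsplit : lowerSum f n z =
      (∑ i ∈ Finset.range k, sInf (f '' Set.Icc (z i) (z (i+1))) * (z (i+1) - z i)) +
        ∑ i ∈ Finset.Ico k n, sInf (f '' Set.Icc (z i) (z (i+1))) * (z (i+1) - z i) := by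
    unfold lowerSum
    rw [Finset.range_eq_Ico, ← Finset.sum_Ico_consecutive _ (Nat.zero_le k) (le_of_lt hkn),
      Finset.range_eq_Ico]
  rcases eq_or_lt_of_le hzk with hzkx | hzkx
  · -- z k = x
    have hPx : IsPartition a x k z := ⟨h0, hzkx, fun i hi => hlt i (lt_trans hi hkn)⟩
    have hLx : lowerSum f k z ≤ lowerDarboux f a x :=
      lowerSum_le_lowerDarboux hf hax hsx hPx
    have htail : ∑ i ∈ Finset.Ico k n, sInf (f '' Set.Icc (z i) (z (i+1))) * (z (i+1) - z i)
        ≤ M * (y - x) := by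
      calc ∑ i ∈ Finset.Ico k n, sInf (f '' Set.Icc (z i) (z (i+1))) * (z (i+1) - z i)
          ≤ ∑ i ∈ Finset.Ico k n, M * (z (i+1) - z i) := by
            refine Finset.sum_le_sum fun i hi => ?_
            obtain ⟨h1, h2⟩ := Finset.mem_Ico.mp hi
            exact mul_le_mul_of_nonneg_right (hinfM i h1 h2) (by linarith [hlt i h2])
        _ = M * (y - x) := by rw [← Finset.mul_sum, htel k n (le_of_lt hkn), hn, hzkx]
    have hks : lowerSum f k z = ∑ i ∈ Finset.range k,
        sInf (f '' Set.Icc (z i) (z (i+1))) * (z (i+1) - z i) := rfl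
    rw [hks] at hLx
    linarith [hsplit]
  · -- z k < x : insert x
    set w : ℕ → ℝ := fun i => if i ≤ k then z i else x with hw
    have hPx : IsPartition a x (k + 1) w := by
      refine ⟨by simp [hw, h0], by simp [hw], ?_⟩
      intro i hi
      rcases Nat.lt_or_ge i k with h | h
      · simp only [hw, if_pos (le_of_lt h), if_pos (Nat.succ_le_of_lt h)]
        exact hlt i (by omega)
      · have hik : i = k := by omega
        rw [hik]
        simpa only [hw, if_pos (le_refl k), if_neg (by omega : ¬ k + 1 ≤ k)] using hzkx
    have hwsum : lowerSum f (k + 1) w =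
        (∑ i ∈ Finset.range k, sInf (f '' Set.Icc (z i) (z (i+1))) * (z (i+1) - z i))
          + sInf (f '' Set.Icc (z k) x) * (x - z k) := by
      unfold lowerSum
      rw [Finset.sum_range_succ]
      congr 1
      · refine Finset.sum_congr rfl fun i hi => ?_
        have hi' := Finset.mem_range.mp hi
        simp only [hw, if_pos (le_of_lt hi'), if_pos (Nat.succ_le_of_lt hi')]
      · simp only [hw, if_pos (le_refl k), if_neg (by omega : ¬ k + 1 ≤ k)]
    have hLx : lowerSum f (k + 1) w ≤ lowerDarboux f a x :=
      lowerSum_le_lowerDarboux hf hax hsx hPx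
    rw [hwsum] at hLx
    have hinf_le : sInf (f '' Set.Icc (z k) (z (k+1))) ≤ sInf (f '' Set.Icc (z k) x) := by
      refine csInf_le_csInf (hbb k hkn) ⟨f (z k), ⟨z k, ⟨le_refl _, le_of_lt hzkx⟩, rfl⟩⟩ ?_
      exact Set.image_mono (f := f) (Set.Icc_subset_Icc le_rfl (le_of_lt hxzk1))
    have hmk : sInf (f '' Set.Icc (z k) (z (k+1))) ≤ M := hinfM k le_rfl hkn
    have htail : ∑ i ∈ Finset.Ico k n, sInf (f '' Set.Icc (z i) (z (i+1))) * (z (i+1) - z i)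
        ≤ sInf (f '' Set.Icc (z k) (z (k+1))) * (x - z k) + M * (y - x) := by
      rw [← Finset.sum_Ico_consecutive _ (Nat.le_succ k) hkn]
      have h1 : ∑ i ∈ Finset.Ico k (k+1),
          sInf (f '' Set.Icc (z i) (z (i+1))) * (z (i+1) - z i)
          = sInf (f '' Set.Icc (z k) (z (k+1))) * (z (k+1) - z k) := by
        rw [Finset.sum_Ico_succ_top le_rfl, Finset.Ico_self, Finset.sum_empty, zero_add]
      have h2 : ∑ i ∈ Finset.Ico (k+1) n,
          sInf (f '' Set.Icc (z i) (z (i+1))) * (z (i+1) - z i)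
          ≤ M * (z n - z (k+1)) := by
        calc ∑ i ∈ Finset.Ico (k+1) n, sInf (f '' Set.Icc (z i) (z (i+1))) * (z (i+1) - z i)
            ≤ ∑ i ∈ Finset.Ico (k+1) n, M * (z (i+1) - z i) := by
              refine Finset.sum_le_sum fun i hi => ?_
              obtain ⟨ha1, ha2⟩ := Finset.mem_Ico.mp hi
              exact mul_le_mul_of_nonneg_right (hinfM i (by omega) ha2)
                (by linarith [hlt i ha2])
          _ = M * (z n - z (k+1)) := by rw [← Finset.mul_sum, htel (k+1) n hkn]
      have h3 : sInf (f '' Set.Icc (z k) (z (k+1))) * (z (k+1) - z k)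
          = sInf (f '' Set.Icc (z k) (z (k+1))) * (x - z k)
            + sInf (f '' Set.Icc (z k) (z (k+1))) * (z (k+1) - x) := by ring
      have h4 : sInf (f '' Set.Icc (z k) (z (k+1))) * (z (k+1) - x) ≤ M * (z (k+1) - x) :=
        mul_le_mul_of_nonneg_right hmk (by linarith)
      have h5 : M * (z (k+1) - x) + M * (z n - z (k+1)) = M * (y - x) := by
        rw [hn]; ring
      rw [h1]
      linarith
    have hmul := mul_le_mul_of_nonneg_right hinf_le (by linarith : (0:ℝ) ≤ x - z k)
    linarith [hsplit]

lemma lower_genPrim (hab : a ≤ b) (hf : BoundedOn f (Set.Icc a b)) :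
    IsGenPrimitive a b f (fun x => lowerDarboux f a x) := by
  intro x hx y hy hxy
  have hax : a ≤ x := hx.1
  have hyb : y ≤ b := hy.2
  have hpos : (0:ℝ) < y - x := by linarith
  have h1 := lower_extend hf hax hxy hyb
  have h2 := lower_split hf hax hxy hyb
  constructor
  · show sInf (f '' Set.Icc x y) ≤ (lowerDarboux f a y - lowerDarboux f a x) / (y - x)
    rw [le_div_iff₀ hpos]
    linarith
  · show (lowerDarboux f a y - lowerDarboux f a x) / (y - x) ≤ sSup (f '' Set.Icc x y)
    rw [div_le_iff₀ hpos]
    linarith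

lemma neg_img (f : ℝ → ℝ) (s : Set ℝ) : (fun t => -f t) '' s = -(f '' s) := by
  ext t; simp only [Set.mem_image, Set.mem_neg]
  constructor
  · rintro ⟨w, hw, h⟩; exact ⟨w, hw, by linarith⟩
  · rintro ⟨w, hw, h⟩; exact ⟨w, hw, by linarith⟩

lemma sInf_neg_img (f : ℝ → ℝ) (s : Set ℝ) :
    sInf ((fun t => -f t) '' s) = -sSup (f '' s) := by
  rw [neg_img, Real.sInf_def, neg_neg]

lemma sSup_neg_img (f : ℝ → ℝ) (s : Set ℝ) :
    sSup ((fun t => -f t) '' s) = -sInf (f '' s) := by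
  rw [neg_img, Real.sInf_def, neg_neg]

lemma upperSum_eq (f : ℝ → ℝ) (n : ℕ) (z : ℕ → ℝ) :
    upperSum f n z = -lowerSum (fun t => -f t) n z := by
  unfold upperSum lowerSum
  rw [← Finset.sum_neg_distrib]
  refine Finset.sum_congr rfl fun i _ => ?_
  rw [sInf_neg_img]
  ring

lemma upperDarboux_eq (f : ℝ → ℝ) (u v : ℝ) :
    upperDarboux f u v = -lowerDarboux (fun t => -f t) u v := by
  unfold upperDarboux lowerDarboux
  have hset : {s : ℝ | ∃ n x, IsPartition u v n x ∧ s = upperSum f n x}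
      = -{s : ℝ | ∃ n x, IsPartition u v n x ∧ s = lowerSum (fun t => -f t) n x} := by
    ext s
    simp only [Set.mem_setOf_eq, Set.mem_neg]
    constructor
    · rintro ⟨n, x, hP, rfl⟩
      exact ⟨n, x, hP, by rw [upperSum_eq]; ring⟩
    · rintro ⟨n, x, hP, h⟩
      refine ⟨n, x, hP, ?_⟩
      rw [upperSum_eq, ← h, neg_neg]
  rw [hset, Real.sInf_def, neg_neg]

lemma boundedOn_neg (hf : BoundedOn f (Set.Icc a b)) :
    BoundedOn (fun t => -f t) (Set.Icc a b) := by
  obtain ⟨M, hM⟩ := hf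
  exact ⟨M, fun x hx => by rw [abs_neg]; exact hM x hx⟩

lemma upper_genPrim (hab : a ≤ b) (hf : BoundedOn f (Set.Icc a b)) :
    IsGenPrimitive a b f (fun x => upperDarboux f a x) := by
  intro x hx y hy hxy
  have hpos : (0:ℝ) < y - x := by linarith
  obtain ⟨h1, h2⟩ := lower_genPrim hab (boundedOn_neg hf) x hx y hy hxy
  simp only at h1 h2
  rw [sInf_neg_img] at h1
  rw [sSup_neg_img] at h2
  have hkey : (upperDarboux f a y - upperDarboux f a x) / (y - x)
      = -((lowerDarboux (fun t => -f t) a y - lowerDarboux (fun t => -f t) a x) / (y - x)) := by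
    rw [upperDarboux_eq, upperDarboux_eq]
    ring
  constructor
  · show sInf (f '' Set.Icc x y) ≤ (upperDarboux f a y - upperDarboux f a x) / (y - x)
    rw [hkey]; linarith
  · show (upperDarboux f a y - upperDarboux f a x) / (y - x) ≤ sSup (f '' Set.Icc x y)
    rw [hkey]; linarith

end DarbouxAux

/-- The indefinite lower and upper Darboux integrals of a bounded function `f` are
generalized primitives of `f`; in particular every bounded function on `[a, b]`
has a generalized primitive. -/
theorem lower_upper_darboux_genPrimitive (a b : ℝ) (hab : a ≤ b) (f : ℝ → ℝ)
    (hf : BoundedOn f (Set.Icc a b)) :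
    IsGenPrimitive a b f (fun x => lowerDarboux f a x) ∧
      IsGenPrimitive a b f (fun x => upperDarboux f a x) ∧
      ∃ F : ℝ → ℝ, IsGenPrimitive a b f F := by
  exact ⟨DarbouxAux.lower_genPrim hab hf, DarbouxAux.upper_genPrim hab hf,
    fun x => lowerDarboux f a x, DarbouxAux.lower_genPrim hab hf⟩
end
end

section
/- Let f : [a,b] → ℝ be bounded and let F be a generalized primitive of f. Then for every x ∈ [a,b) the right Dini derivatives of F at x satisfy min{f(x), liminf_{y→x⁺} f(y)} ≤ D₊F(x) ≤ D⁺F(x) ≤ max{f(x), limsup_{y→x⁺} f(y)}, and for every x ∈ (a,b] the left Dini derivatives satisfy min{f(x), liminf_{y→x⁻} f(y)} ≤ D₋F(x) ≤ D⁻F(x) ≤ max{f(x), limsup_{y→x⁻} f(y)}. -/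
noncomputable section

/-- The upper right Dini derivative `D⁺F(x) = limsup_{y→x⁺} (F y - F x)/(y - x)`,
with values in the extended reals. -/
noncomputable def DiniUpperRight (F : ℝ → ℝ) (x : ℝ) : EReal :=
  Filter.limsup (fun y => (((F y - F x) / (y - x) : ℝ) : EReal)) (nhdsWithin x (Set.Ioi x))

/-- The lower right Dini derivative `D₊F(x) = liminf_{y→x⁺} (F y - F x)/(y - x)`. -/
noncomputable def DiniLowerRight (F : ℝ → ℝ) (x : ℝ) : EReal :=
  Filter.liminf (fun y => (((F y - F x) / (y - x) : ℝ) : EReal)) (nhdsWithin x (Set.Ioi x))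

/-- The upper left Dini derivative `D⁻F(x) = limsup_{y→x⁻} (F y - F x)/(y - x)`. -/
noncomputable def DiniUpperLeft (F : ℝ → ℝ) (x : ℝ) : EReal :=
  Filter.limsup (fun y => (((F y - F x) / (y - x) : ℝ) : EReal)) (nhdsWithin x (Set.Iio x))

/-- The lower left Dini derivative `D₋F(x) = liminf_{y→x⁻} (F y - F x)/(y - x)`. -/
noncomputable def DiniLowerLeft (F : ℝ → ℝ) (x : ℝ) : EReal :=
  Filter.liminf (fun y => (((F y - F x) / (y - x) : ℝ) : EReal)) (nhdsWithin x (Set.Iio x))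

theorem aux_ur (a b x : ℝ) (f F : ℝ → ℝ) (hF : IsGenPrimitive a b f F)
    (hx : x ∈ Set.Ico a b) :
    Filter.limsup (fun y => (((F y - F x) / (y - x) : ℝ) : EReal)) (nhdsWithin x (Set.Ioi x)) ≤
      max ((f x : EReal))
        (Filter.limsup (fun y => ((f y : ℝ) : EReal)) (nhdsWithin x (Set.Ioi x))) := by
  apply le_of_forall_gt_imp_ge_of_dense
  intro c hc
  have hfx : (f x : EReal) < c := lt_of_le_of_lt (le_max_left _ _) hc
  rcases eq_or_ne c ⊤ with rfl | hct
  · exact le_top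
  have hcb : c ≠ ⊥ := fun h => by simp [h] at hfx
  lift c to ℝ using ⟨hct, hcb⟩
  have hev : ∀ᶠ y in nhdsWithin x (Set.Ioi x), ((f y : ℝ) : EReal) < (c : EReal) :=
    Filter.eventually_lt_of_limsup_lt (lt_of_le_of_lt (le_max_right _ _) hc)
  obtain ⟨u, hu, huf⟩ := mem_nhdsGT_iff_exists_Ioo_subset.1 hev
  have hmem : Set.Ioo x (min u b) ∈ nhdsWithin x (Set.Ioi x) :=
    Ioo_mem_nhdsGT_of_mem ⟨le_refl x, lt_min hu hx.2⟩
  refine Filter.limsup_le_of_le (by isBoundedDefault) ?_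
  filter_upwards [hmem] with y hy
  have hxy : x < y := hy.1
  have hyb : y < b := lt_of_lt_of_le hy.2 (min_le_right _ _)
  have hyu : y < u := lt_of_lt_of_le hy.2 (min_le_left _ _)
  have h1 := (hF x ⟨hx.1, hx.2.le⟩ y ⟨hx.1.trans hxy.le, hyb.le⟩ hxy).2
  have h2 : sSup (f '' Set.Icc x y) ≤ c := by
    apply csSup_le ((Set.nonempty_Icc.2 hxy.le).image f)
    rintro _ ⟨z, hz, rfl⟩
    rcases eq_or_lt_of_le hz.1 with rfl | hxz
    · exact (EReal.coe_lt_coe_iff.1 hfx).le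
    · exact (EReal.coe_lt_coe_iff.1 (huf ⟨hxz, lt_of_le_of_lt hz.2 hyu⟩)).le
  exact_mod_cast h1.trans h2

theorem aux_lr (a b x : ℝ) (f F : ℝ → ℝ) (hF : IsGenPrimitive a b f F)
    (hx : x ∈ Set.Ico a b) :
    min ((f x : EReal))
        (Filter.liminf (fun y => ((f y : ℝ) : EReal)) (nhdsWithin x (Set.Ioi x))) ≤
      Filter.liminf (fun y => (((F y - F x) / (y - x) : ℝ) : EReal)) (nhdsWithin x (Set.Ioi x)) := by
  apply le_of_forall_lt_imp_le_of_dense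
  intro c hc
  have hfx : c < (f x : EReal) := lt_of_lt_of_le hc (min_le_left _ _)
  rcases eq_or_ne c ⊥ with rfl | hcb
  · exact bot_le
  have hct : c ≠ ⊤ := fun h => by simp [h] at hfx
  lift c to ℝ using ⟨hct, hcb⟩
  have hev : ∀ᶠ y in nhdsWithin x (Set.Ioi x), (c : EReal) < ((f y : ℝ) : EReal) :=
    Filter.eventually_lt_of_lt_liminf (lt_of_lt_of_le hc (min_le_right _ _))
  obtain ⟨u, hu, huf⟩ := mem_nhdsGT_iff_exists_Ioo_subset.1 hev
  have hmem : Set.Ioo x (min u b) ∈ nhdsWithin x (Set.Ioi x) :=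
    Ioo_mem_nhdsGT_of_mem ⟨le_refl x, lt_min hu hx.2⟩
  refine Filter.le_liminf_of_le (by isBoundedDefault) ?_
  filter_upwards [hmem] with y hy
  have hxy : x < y := hy.1
  have hyb : y < b := lt_of_lt_of_le hy.2 (min_le_right _ _)
  have hyu : y < u := lt_of_lt_of_le hy.2 (min_le_left _ _)
  have h1 := (hF x ⟨hx.1, hx.2.le⟩ y ⟨hx.1.trans hxy.le, hyb.le⟩ hxy).1
  have h2 : c ≤ sInf (f '' Set.Icc x y) := by
    apply le_csInf ((Set.nonempty_Icc.2 hxy.le).image f)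
    rintro _ ⟨z, hz, rfl⟩
    rcases eq_or_lt_of_le hz.1 with rfl | hxz
    · exact (EReal.coe_lt_coe_iff.1 hfx).le
    · exact (EReal.coe_lt_coe_iff.1 (huf ⟨hxz, lt_of_le_of_lt hz.2 hyu⟩)).le
  exact_mod_cast h2.trans h1

theorem quot_flip (F : ℝ → ℝ) (x y : ℝ) :
    (F y - F x) / (y - x) = (F x - F y) / (x - y) := by
  rw [← neg_sub (F x), ← neg_sub x, neg_div_neg_eq]

theorem aux_ul (a b x : ℝ) (f F : ℝ → ℝ) (hF : IsGenPrimitive a b f F)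
    (hx : x ∈ Set.Ioc a b) :
    Filter.limsup (fun y => (((F y - F x) / (y - x) : ℝ) : EReal)) (nhdsWithin x (Set.Iio x)) ≤
      max ((f x : EReal))
        (Filter.limsup (fun y => ((f y : ℝ) : EReal)) (nhdsWithin x (Set.Iio x))) := by
  apply le_of_forall_gt_imp_ge_of_dense
  intro c hc
  have hfx : (f x : EReal) < c := lt_of_le_of_lt (le_max_left _ _) hc
  rcases eq_or_ne c ⊤ with rfl | hct
  · exact le_top
  have hcb : c ≠ ⊥ := fun h => by simp [h] at hfx
  lift c to ℝ using ⟨hct, hcb⟩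
  have hev : ∀ᶠ y in nhdsWithin x (Set.Iio x), ((f y : ℝ) : EReal) < (c : EReal) :=
    Filter.eventually_lt_of_limsup_lt (lt_of_le_of_lt (le_max_right _ _) hc)
  obtain ⟨l, hl, hlf⟩ := mem_nhdsLT_iff_exists_Ioo_subset.1 hev
  have hmem : Set.Ioo (max l a) x ∈ nhdsWithin x (Set.Iio x) :=
    Ioo_mem_nhdsLT_of_mem ⟨max_lt hl hx.1, le_refl x⟩
  refine Filter.limsup_le_of_le (by isBoundedDefault) ?_
  filter_upwards [hmem] with y hy
  have hyx : y < x := hy.2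
  have hay : a < y := lt_of_le_of_lt (le_max_right _ _) hy.1
  have hly : l < y := lt_of_le_of_lt (le_max_left _ _) hy.1
  have h1 := (hF y ⟨hay.le, hyx.le.trans hx.2⟩ x ⟨hx.1.le, hx.2⟩ hyx).2
  have h2 : sSup (f '' Set.Icc y x) ≤ c := by
    apply csSup_le ((Set.nonempty_Icc.2 hyx.le).image f)
    rintro _ ⟨z, hz, rfl⟩
    rcases eq_or_lt_of_le hz.2 with rfl | hzx
    · exact (EReal.coe_lt_coe_iff.1 hfx).le
    · exact (EReal.coe_lt_coe_iff.1 (hlf ⟨lt_of_lt_of_le hly hz.1, hzx⟩)).le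
  rw [quot_flip]
  exact_mod_cast h1.trans h2

theorem aux_ll (a b x : ℝ) (f F : ℝ → ℝ) (hF : IsGenPrimitive a b f F)
    (hx : x ∈ Set.Ioc a b) :
    min ((f x : EReal))
        (Filter.liminf (fun y => ((f y : ℝ) : EReal)) (nhdsWithin x (Set.Iio x))) ≤
      Filter.liminf (fun y => (((F y - F x) / (y - x) : ℝ) : EReal)) (nhdsWithin x (Set.Iio x)) := by
  apply le_of_forall_lt_imp_le_of_dense
  intro c hc
  have hfx : c < (f x : EReal) := lt_of_lt_of_le hc (min_le_left _ _)
  rcases eq_or_ne c ⊥ with rfl | hcb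
  · exact bot_le
  have hct : c ≠ ⊤ := fun h => by simp [h] at hfx
  lift c to ℝ using ⟨hct, hcb⟩
  have hev : ∀ᶠ y in nhdsWithin x (Set.Iio x), (c : EReal) < ((f y : ℝ) : EReal) :=
    Filter.eventually_lt_of_lt_liminf (lt_of_lt_of_le hc (min_le_right _ _))
  obtain ⟨l, hl, hlf⟩ := mem_nhdsLT_iff_exists_Ioo_subset.1 hev
  have hmem : Set.Ioo (max l a) x ∈ nhdsWithin x (Set.Iio x) :=
    Ioo_mem_nhdsLT_of_mem ⟨max_lt hl hx.1, le_refl x⟩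
  refine Filter.le_liminf_of_le (by isBoundedDefault) ?_
  filter_upwards [hmem] with y hy
  have hyx : y < x := hy.2
  have hay : a < y := lt_of_le_of_lt (le_max_right _ _) hy.1
  have hly : l < y := lt_of_le_of_lt (le_max_left _ _) hy.1
  have h1 := (hF y ⟨hay.le, hyx.le.trans hx.2⟩ x ⟨hx.1.le, hx.2⟩ hyx).1
  have h2 : c ≤ sInf (f '' Set.Icc y x) := by
    apply le_csInf ((Set.nonempty_Icc.2 hyx.le).image f)
    rintro _ ⟨z, hz, rfl⟩
    rcases eq_or_lt_of_le hz.2 with rfl | hzx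
    · exact (EReal.coe_lt_coe_iff.1 hfx).le
    · exact (EReal.coe_lt_coe_iff.1 (hlf ⟨lt_of_lt_of_le hly hz.1, hzx⟩)).le
  rw [quot_flip]
  exact_mod_cast h2.trans h1


/-- Dini derivative bounds for a generalized primitive `F` of a bounded function `f`:
for `x ∈ [a, b)`,
`min {f x, liminf_{y→x⁺} f y} ≤ D₊F(x) ≤ D⁺F(x) ≤ max {f x, limsup_{y→x⁺} f y}`,
and the analogous left-hand inequalities hold for `x ∈ (a, b]`. -/
theorem genPrimitive_dini_bounds (a b : ℝ) (f F : ℝ → ℝ)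
    (hf : ∃ M : ℝ, ∀ x ∈ Set.Icc a b, |f x| ≤ M)
    (hF : IsGenPrimitive a b f F) :
    (∀ x ∈ Set.Ico a b,
      min ((f x : EReal))
          (Filter.liminf (fun y => ((f y : ℝ) : EReal)) (nhdsWithin x (Set.Ioi x))) ≤
        DiniLowerRight F x ∧
      DiniLowerRight F x ≤ DiniUpperRight F x ∧
      DiniUpperRight F x ≤
        max ((f x : EReal))
          (Filter.limsup (fun y => ((f y : ℝ) : EReal)) (nhdsWithin x (Set.Ioi x)))) ∧
    (∀ x ∈ Set.Ioc a b,
      min ((f x : EReal))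
          (Filter.liminf (fun y => ((f y : ℝ) : EReal)) (nhdsWithin x (Set.Iio x))) ≤
        DiniLowerLeft F x ∧
      DiniLowerLeft F x ≤ DiniUpperLeft F x ∧
      DiniUpperLeft F x ≤
        max ((f x : EReal))
          (Filter.limsup (fun y => ((f y : ℝ) : EReal)) (nhdsWithin x (Set.Iio x)))) := by
  refine ⟨fun x hx => ⟨aux_lr a b x f F hF hx, Filter.liminf_le_limsup,
      aux_ur a b x f F hF hx⟩,
    fun x hx => ⟨aux_ll a b x f F hF hx, Filter.liminf_le_limsup,
      aux_ul a b x f F hF hx⟩⟩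
end
end

section
/- Let f : [a,b] → ℝ be bounded and let A ∈ ℝ. Then the following are equivalent: (1) f is Riemann integrable on [a,b] and ∫_a^b f(x) dx = A; (2) every generalized primitive F of f satisfies F(b) − F(a) = A. -/
noncomputable section

section BarrowHelpers

open Set Finset

private lemma steps_mono {n : ℕ} {x : ℕ → ℝ} (h : ∀ i < n, x i ≤ x (i + 1))
    {i j : ℕ} (hij : i ≤ j) (hj : j ≤ n) : x i ≤ x j := by
  induction hij with
  | refl => exact le_rfl
  | @step m hm ih =>
      exact le_trans (ih (le_trans (Nat.le_succ m) hj)) (h m (Nat.lt_of_succ_le hj))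

private lemma partition_mem {a b : ℝ} {n : ℕ} {x : ℕ → ℝ} (h : IsPartition a b n x)
    {i : ℕ} (hi : i ≤ n) : x i ∈ Set.Icc a b := by
  have hmono : ∀ i < n, x i ≤ x (i + 1) := fun i hi => (h.2.2 i hi).le
  exact ⟨h.1 ▸ steps_mono hmono (Nat.zero_le i) hi,
    h.2.1 ▸ steps_mono hmono hi le_rfl⟩

private lemma exists_partition {u v : ℝ} (h : u ≤ v) : ∃ n x, IsPartition u v n x := by
  rcases eq_or_lt_of_le h with h | h
  · exact ⟨0, fun _ => u, rfl, h ▸ rfl, fun i hi => absurd hi (Nat.not_lt_zero i)⟩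
  · refine ⟨1, fun i => if i = 0 then u else v, by simp, by simp, ?_⟩
    intro i hi
    interval_cases i
    simpa using h

private lemma img_ne {f : ℝ → ℝ} {u v : ℝ} (huv : u ≤ v) :
    (f '' Set.Icc u v).Nonempty :=
  ⟨f u, ⟨u, ⟨le_rfl, huv⟩, rfl⟩⟩

private lemma img_bddAbove {f : ℝ → ℝ} {a b M u v : ℝ}
    (hM : ∀ t ∈ Set.Icc a b, |f t| ≤ M) (hu : a ≤ u) (hv : v ≤ b) :
    BddAbove (f '' Set.Icc u v) := by
  refine ⟨M, ?_⟩
  rintro s ⟨t, ht, rfl⟩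
  exact (abs_le.mp (hM t ⟨hu.trans ht.1, ht.2.trans hv⟩)).2

private lemma img_bddBelow {f : ℝ → ℝ} {a b M u v : ℝ}
    (hM : ∀ t ∈ Set.Icc a b, |f t| ≤ M) (hu : a ≤ u) (hv : v ≤ b) :
    BddBelow (f '' Set.Icc u v) := by
  refine ⟨-M, ?_⟩
  rintro s ⟨t, ht, rfl⟩
  exact (abs_le.mp (hM t ⟨hu.trans ht.1, ht.2.trans hv⟩)).1

private lemma lowerSum_le_bound {f : ℝ → ℝ} {a b M u v : ℝ} {n : ℕ} {x : ℕ → ℝ}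
    (hM : ∀ t ∈ Set.Icc a b, |f t| ≤ M) (hu : a ≤ u) (hv : v ≤ b)
    (hp : IsPartition u v n x) : lowerSum f n x ≤ M * (v - u) := by
  have hmono : ∀ i < n, x i ≤ x (i + 1) := fun i hi => (hp.2.2 i hi).le
  have key : ∀ i ∈ Finset.range n,
      sInf (f '' Set.Icc (x i) (x (i + 1))) * (x (i + 1) - x i)
        ≤ M * (x (i + 1) - x i) := by
    intro i hi
    rw [Finset.mem_range] at hi
    have h1 : x i ∈ Set.Icc u v := partition_mem hp hi.le
    have h2 : x (i + 1) ∈ Set.Icc u v := partition_mem hp hi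
    have hmem : x i ∈ Set.Icc (x i) (x (i + 1)) := ⟨le_rfl, hmono i hi⟩
    have hle : sInf (f '' Set.Icc (x i) (x (i + 1))) ≤ f (x i) :=
      csInf_le (img_bddBelow hM (hu.trans h1.1) (h2.2.trans hv))
        ⟨x i, hmem, rfl⟩
    have hfM : f (x i) ≤ M :=
      (abs_le.mp (hM (x i) ⟨hu.trans h1.1, h1.2.trans hv⟩)).2
    exact mul_le_mul_of_nonneg_right (hle.trans hfM) (by linarith [hmono i hi])
  calc lowerSum f n x ≤ ∑ i ∈ Finset.range n, M * (x (i + 1) - x i) :=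
        Finset.sum_le_sum key
    _ = M * (v - u) := by
        rw [← Finset.mul_sum, Finset.sum_range_sub (fun i => x i), hp.1, hp.2.1]

private lemma lowerSet_bddAbove {f : ℝ → ℝ} {a b M u v : ℝ}
    (hM : ∀ t ∈ Set.Icc a b, |f t| ≤ M) (hu : a ≤ u) (hv : v ≤ b) :
    BddAbove {s : ℝ | ∃ n x, IsPartition u v n x ∧ s = lowerSum f n x} := by
  refine ⟨M * (v - u), ?_⟩
  rintro s ⟨n, x, hp, rfl⟩
  exact lowerSum_le_bound hM hu hv hp

private lemma lowerDarboux_self (f : ℝ → ℝ) (u : ℝ) : lowerDarboux f u u = 0 := by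
  have hset : {s : ℝ | ∃ n x, IsPartition u u n x ∧ s = lowerSum f n x} = {0} := by
    ext s
    simp only [Set.mem_setOf_eq, Set.mem_singleton_iff]
    constructor
    · rintro ⟨n, x, hp, rfl⟩
      have hn : n = 0 := by
        by_contra hn
        obtain ⟨m, rfl⟩ := Nat.exists_eq_succ_of_ne_zero hn
        have h1 : x 0 < x 1 := hp.2.2 0 (Nat.succ_pos m)
        have h2 : x 1 ≤ x (m + 1) :=
          steps_mono (fun i hi => (hp.2.2 i hi).le) (Nat.one_le_iff_ne_zero.mpr (by simp))
            le_rfl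
        rw [hp.1, hp.2.1] at *
        linarith
      subst hn
      simp [lowerSum]
    · rintro rfl
      exact ⟨0, fun _ => u, ⟨rfl, rfl, fun i hi => absurd hi (Nat.not_lt_zero i)⟩,
        by simp [lowerSum]⟩
  rw [lowerDarboux, hset, csSup_singleton]

private lemma lowerDarboux_add_le {f : ℝ → ℝ} {a b M x y : ℝ}
    (hM : ∀ t ∈ Set.Icc a b, |f t| ≤ M) (hx : x ∈ Set.Icc a b) (hy : y ∈ Set.Icc a b)
    (hxy : x ≤ y) :
    lowerDarboux f a x + sInf (f '' Set.Icc x y) * (y - x) ≤ lowerDarboux f a y := by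
  rcases eq_or_lt_of_le hxy with rfl | hlt
  · simp
  · set c := sInf (f '' Set.Icc x y) * (y - x) with hc
    have key : ∀ s ∈ {s : ℝ | ∃ n p, IsPartition a x n p ∧ s = lowerSum f n p},
        s + c ≤ lowerDarboux f a y := by
      rintro s ⟨n, p, hp, rfl⟩
      set p' : ℕ → ℝ := fun i => if i ≤ n then p i else y with hp'
      have hpart : IsPartition a y (n + 1) p' := by
        refine ⟨?_, ?_, ?_⟩
        · simp only [hp', if_pos (Nat.zero_le n)]; exact hp.1
        · simp [hp']
        · intro i hi
          rcases Nat.lt_succ_iff_lt_or_eq.mp hi with h | rfl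
          · simp only [hp', if_pos h.le, if_pos (Nat.succ_le_of_lt h)]
            exact hp.2.2 i h
          · simp only [hp', if_pos le_rfl, if_neg (Nat.not_succ_le_self i)]
            exact hp.2.1 ▸ hlt
      have hsum : lowerSum f (n + 1) p' = lowerSum f n p + c := by
        rw [lowerSum, Finset.sum_range_succ]
        congr 1
        · refine Finset.sum_congr rfl fun i hi => ?_
          rw [Finset.mem_range] at hi
          rw [show p' i = p i from if_pos hi.le,
            show p' (i + 1) = p (i + 1) from if_pos (Nat.succ_le_of_lt hi)]
        · rw [show p' n = x from by simp only [hp', if_pos le_rfl]; exact hp.2.1,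
            show p' (n + 1) = y from if_neg (Nat.not_succ_le_self n)]
      have := le_csSup (lowerSet_bddAbove hM le_rfl hy.2)
        (Set.mem_setOf_eq ▸ ⟨n + 1, p', hpart, rfl⟩ :
          lowerSum f (n + 1) p' ∈ {s : ℝ | ∃ n q, IsPartition a y n q ∧ s = lowerSum f n q})
      rw [hsum] at this
      exact this
    have hne : {s : ℝ | ∃ n p, IsPartition a x n p ∧ s = lowerSum f n p}.Nonempty := by
      obtain ⟨n, p, hp⟩ := exists_partition hx.1
      exact ⟨lowerSum f n p, n, p, hp, rfl⟩
    have := csSup_le hne fun s hs => le_sub_iff_add_le.mpr (key s hs)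
    rw [lowerDarboux]
    linarith

private lemma weakSum_le {f : ℝ → ℝ} {a b M : ℝ}
    (hM : ∀ t ∈ Set.Icc a b, |f t| ≤ M) :
    ∀ (n : ℕ) (p : ℕ → ℝ), p 0 = a → (∀ i < n, p i ≤ p (i + 1)) → p n ≤ b →
      (∑ i ∈ Finset.range n, sInf (f '' Set.Icc (p i) (p (i + 1))) * (p (i + 1) - p i))
        ≤ lowerDarboux f a (p n) := by
  intro n
  induction n with
  | zero =>
      intro p h0 _ _
      rw [h0, lowerDarboux_self]
      simp
  | succ m ih =>
      intro p h0 hmono hb'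
      have hmb : p m ≤ b := (hmono m (Nat.lt_succ_self m)).trans hb'
      have ham : a ≤ p m := h0 ▸ steps_mono (fun i hi => hmono i (hi.trans (Nat.lt_succ_self m)))
        (Nat.zero_le m) le_rfl
      have h1 := ih p h0 (fun i hi => hmono i (hi.trans (Nat.lt_succ_self m))) hmb
      have h2 := lowerDarboux_add_le hM (⟨ham, hmb⟩ : p m ∈ Set.Icc a b)
        (⟨ham.trans (hmono m (Nat.lt_succ_self m)), hb'⟩ : p (m + 1) ∈ Set.Icc a b)
        (hmono m (Nat.lt_succ_self m))
      rw [Finset.sum_range_succ]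
      linarith

private lemma lowerDarboux_le_add {f : ℝ → ℝ} {a b M x y : ℝ}
    (hM : ∀ t ∈ Set.Icc a b, |f t| ≤ M) (hx : x ∈ Set.Icc a b) (hy : y ∈ Set.Icc a b)
    (hxy : x ≤ y) :
    lowerDarboux f a y ≤ lowerDarboux f a x + sSup (f '' Set.Icc x y) * (y - x) := by
  set S := sSup (f '' Set.Icc x y) with hS
  have hne : {s : ℝ | ∃ n p, IsPartition a y n p ∧ s = lowerSum f n p}.Nonempty := by
    obtain ⟨n, p, hp⟩ := exists_partition hy.1
    exact ⟨lowerSum f n p, n, p, hp, rfl⟩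
  refine csSup_le hne ?_
  rintro s ⟨n, p, hp, rfl⟩
  have hmono : ∀ i < n, p i ≤ p (i + 1) := fun i hi => (hp.2.2 i hi).le
  set q : ℕ → ℝ := fun i => min (p i) x with hq
  set r : ℕ → ℝ := fun i => max (p i) x with hr
  have hqmono : ∀ i < n, q i ≤ q (i + 1) :=
    fun i hi => min_le_min (hmono i hi) le_rfl
  have key : ∀ i ∈ Finset.range n,
      sInf (f '' Set.Icc (p i) (p (i + 1))) * (p (i + 1) - p i) ≤
        sInf (f '' Set.Icc (q i) (q (i + 1))) * (q (i + 1) - q i)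
          + S * (r (i + 1) - r i) := by
    intro i hi
    rw [Finset.mem_range] at hi
    have hpi : p i ∈ Set.Icc a y := partition_mem hp hi.le
    have hpi1 : p (i + 1) ∈ Set.Icc a y := partition_mem hp hi
    have hpiab : p i ∈ Set.Icc a b := ⟨hpi.1, hpi.2.trans hy.2⟩
    have hpi1ab : p (i + 1) ∈ Set.Icc a b := ⟨hpi1.1, hpi1.2.trans hy.2⟩
    have hdecomp : p (i + 1) - p i = (q (i + 1) - q i) + (r (i + 1) - r i) := by
      have h1 : q i + r i = p i + x := min_add_max (p i) x
      have h2 : q (i + 1) + r (i + 1) = p (i + 1) + x := min_add_max (p (i + 1)) x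
      linarith
    set m := sInf (f '' Set.Icc (p i) (p (i + 1))) with hm
    have claim1 : m * (q (i + 1) - q i) ≤
        sInf (f '' Set.Icc (q i) (q (i + 1))) * (q (i + 1) - q i) := by
      rcases eq_or_lt_of_le (hqmono i hi) with heq | hlt
      · rw [← heq]; simp
      · have hpix : p i ≤ x := by
          by_contra hcon
          push_neg at hcon
          have : q i = x := min_eq_right hcon.le
          have h2 : q (i + 1) ≤ x := min_le_right _ _
          linarith
        have hqieq : q i = p i := min_eq_left hpix
        have hsub : Set.Icc (q i) (q (i + 1)) ⊆ Set.Icc (p i) (p (i + 1)) := by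
          rw [hqieq]
          exact Set.Icc_subset_Icc le_rfl (min_le_left _ _)
        have hsInf : m ≤ sInf (f '' Set.Icc (q i) (q (i + 1))) :=
          csInf_le_csInf (img_bddBelow hM hpiab.1 hpi1ab.2)
            (img_ne hlt.le) (Set.image_mono hsub)
        exact mul_le_mul_of_nonneg_right hsInf (by linarith)
    have claim2 : m * (r (i + 1) - r i) ≤ S * (r (i + 1) - r i) := by
      have hrmono : r i ≤ r (i + 1) := max_le_max (hmono i hi) le_rfl
      rcases eq_or_lt_of_le hrmono with heq | hlt
      · rw [← heq]; simp
      · have hxpi1 : x < p (i + 1) := by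
          by_contra hcon
          push_neg at hcon
          have h1 : r (i + 1) = x := max_eq_right hcon
          have h2 : x ≤ r i := le_max_right _ _
          linarith
        set t := max (p i) x with ht
        have ht1 : t ∈ Set.Icc (p i) (p (i + 1)) :=
          ⟨le_max_left _ _, max_le (hmono i hi) hxpi1.le⟩
        have ht2 : t ∈ Set.Icc x y :=
          ⟨le_max_right _ _, max_le (hp.2.1 ▸
            steps_mono hmono hi.le le_rfl) hxy⟩
        have hm_le : m ≤ f t :=
          csInf_le (img_bddBelow hM hpiab.1 hpi1ab.2) ⟨t, ht1, rfl⟩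
        have hf_le : f t ≤ S :=
          le_csSup (img_bddAbove hM (hx.1 : a ≤ x) hy.2) ⟨t, ht2, rfl⟩
        exact mul_le_mul_of_nonneg_right (hm_le.trans hf_le) (by linarith)
    calc m * (p (i + 1) - p i)
        = m * (q (i + 1) - q i) + m * (r (i + 1) - r i) := by
          rw [hdecomp]; ring
      _ ≤ _ := add_le_add claim1 claim2
  have hq0 : q 0 = a := by
    simp only [hq]; rw [hp.1]; exact min_eq_left hx.1
  have hqn : q n = x := by
    simp only [hq]; rw [hp.2.1]; exact min_eq_right hxy
  have hW : (∑ i ∈ Finset.range n, sInf (f '' Set.Icc (q i) (q (i + 1))) * (q (i + 1) - q i))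
      ≤ lowerDarboux f a x := by
    have := weakSum_le hM n q hq0 hqmono (hqn ▸ hx.2)
    rwa [hqn] at this
  have hr0 : r 0 = x := by simp only [hr]; rw [hp.1]; exact max_eq_right hx.1
  have hrn : r n = y := by simp only [hr]; rw [hp.2.1]; exact max_eq_left hxy
  have hT : (∑ i ∈ Finset.range n, S * (r (i + 1) - r i)) = S * (y - x) := by
    rw [← Finset.mul_sum, Finset.sum_range_sub (fun i => r i), hrn, hr0]
  calc lowerSum f n p
      ≤ ∑ i ∈ Finset.range n,
          (sInf (f '' Set.Icc (q i) (q (i + 1))) * (q (i + 1) - q i)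
            + S * (r (i + 1) - r i)) := Finset.sum_le_sum key
    _ = (∑ i ∈ Finset.range n, sInf (f '' Set.Icc (q i) (q (i + 1))) * (q (i + 1) - q i))
          + ∑ i ∈ Finset.range n, S * (r (i + 1) - r i) := Finset.sum_add_distrib
    _ ≤ lowerDarboux f a x + S * (y - x) := by rw [hT]; linarith

private lemma isGenPrimitive_lowerDarboux {f : ℝ → ℝ} {a b M : ℝ}
    (hM : ∀ t ∈ Set.Icc a b, |f t| ≤ M) :
    IsGenPrimitive a b f (fun t => lowerDarboux f a t) := by
  intro x hx y hy hxy
  have hA := lowerDarboux_add_le hM hx hy hxy.le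
  have hB := lowerDarboux_le_add hM hx hy hxy.le
  have hpos : 0 < y - x := by linarith
  constructor
  · rw [le_div_iff₀ hpos]; simpa using by linarith
  · rw [div_le_iff₀ hpos]; simpa using by linarith

private lemma sSup_neg_set (s : Set ℝ) : sSup (-s) = -sInf s := by
  rw [Real.sInf_def, neg_neg]

private lemma sInf_neg_set (s : Set ℝ) : sInf (-s) = -sSup s := by
  rw [Real.sInf_def, neg_neg s]

private lemma image_neg_fun (f : ℝ → ℝ) (s : Set ℝ) :
    (fun t => -f t) '' s = -(f '' s) := by
  rw [← Set.image_neg_eq_neg, ← Set.image_comp]; rfl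

private lemma sInf_img_neg (f : ℝ → ℝ) (s : Set ℝ) :
    sInf ((fun t => -f t) '' s) = -sSup (f '' s) := by
  rw [image_neg_fun, sInf_neg_set]

private lemma sSup_img_neg (f : ℝ → ℝ) (s : Set ℝ) :
    sSup ((fun t => -f t) '' s) = -sInf (f '' s) := by
  rw [image_neg_fun, sSup_neg_set]

private lemma lowerSum_neg (f : ℝ → ℝ) (n : ℕ) (x : ℕ → ℝ) :
    lowerSum (fun t => -f t) n x = -upperSum f n x := by
  rw [upperSum, lowerSum, ← Finset.sum_neg_distrib]
  exact Finset.sum_congr rfl fun i _ => by rw [sInf_img_neg]; ring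

private lemma lowerDarboux_neg (f : ℝ → ℝ) (u v : ℝ) :
    lowerDarboux (fun t => -f t) u v = -upperDarboux f u v := by
  have hset : {s : ℝ | ∃ n x, IsPartition u v n x ∧ s = lowerSum (fun t => -f t) n x}
      = -{s : ℝ | ∃ n x, IsPartition u v n x ∧ s = upperSum f n x} := by
    ext s
    simp only [Set.mem_neg, Set.mem_setOf_eq, lowerSum_neg]
    constructor
    · rintro ⟨n, x, h1, h2⟩; exact ⟨n, x, h1, by linarith⟩
    · rintro ⟨n, x, h1, h2⟩; exact ⟨n, x, h1, by linarith⟩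
  rw [lowerDarboux, upperDarboux, hset, sSup_neg_set]

private lemma genPrim_sum_bounds {f F : ℝ → ℝ} {a b : ℝ} {n : ℕ} {x : ℕ → ℝ}
    (hF : IsGenPrimitive a b f F) (hp : IsPartition a b n x) :
    lowerSum f n x ≤ F b - F a ∧ F b - F a ≤ upperSum f n x := by
  have tele : F b - F a = ∑ i ∈ Finset.range n, (F (x (i + 1)) - F (x i)) := by
    rw [Finset.sum_range_sub (fun i => F (x i)), hp.1, hp.2.1]
  have key : ∀ i ∈ Finset.range n,
      sInf (f '' Set.Icc (x i) (x (i + 1))) * (x (i + 1) - x i) ≤ F (x (i + 1)) - F (x i)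
      ∧ F (x (i + 1)) - F (x i) ≤ sSup (f '' Set.Icc (x i) (x (i + 1))) * (x (i + 1) - x i) := by
    intro i hi
    rw [Finset.mem_range] at hi
    have h1 : x i ∈ Set.Icc a b := partition_mem hp hi.le
    have h2 : x (i + 1) ∈ Set.Icc a b := partition_mem hp hi
    have hlt : x i < x (i + 1) := hp.2.2 i hi
    have hpos : 0 < x (i + 1) - x i := by linarith
    obtain ⟨hl, hr⟩ := hF (x i) h1 (x (i + 1)) h2 hlt
    rw [le_div_iff₀ hpos] at hl
    rw [div_le_iff₀ hpos] at hr
    exact ⟨hl, hr⟩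
  constructor
  · rw [tele, lowerSum]
    exact Finset.sum_le_sum fun i hi => (key i hi).1
  · rw [tele, upperSum]
    exact Finset.sum_le_sum fun i hi => (key i hi).2

/-- **Integrability test via generalized primitives.** For bounded `f` on `[a, b]` and
`A ∈ ℝ`, `f` is Riemann integrable with `∫_a^b f = A` if and only if every generalized
primitive `F` of `f` satisfies `F b - F a = A`. -/
theorem riemannIntegrable_iff_genPrimitive_barrow (a b : ℝ) (hab : a ≤ b) (f : ℝ → ℝ)
    (hf : BoundedOn f (Set.Icc a b)) (A : ℝ) :
    (RiemannIntegrableOn f a b ∧ riemannIntegral f a b = A) ↔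
      (∀ F : ℝ → ℝ, IsGenPrimitive a b f F → F b - F a = A) := by
  obtain ⟨M, hM⟩ := hf
  have hne : {s : ℝ | ∃ n x, IsPartition a b n x ∧ s = lowerSum f n x}.Nonempty := by
    obtain ⟨n, p, hp⟩ := exists_partition hab
    exact ⟨lowerSum f n p, n, p, hp, rfl⟩
  have hneU : {s : ℝ | ∃ n x, IsPartition a b n x ∧ s = upperSum f n x}.Nonempty := by
    obtain ⟨n, p, hp⟩ := exists_partition hab
    exact ⟨upperSum f n p, n, p, hp, rfl⟩
  constructor
  · rintro ⟨⟨_, heq⟩, hint⟩ F hF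
    rw [riemannIntegral, if_pos hab] at hint
    have h1 : lowerDarboux f a b ≤ F b - F a := by
      refine csSup_le hne ?_
      rintro s ⟨n, p, hp, rfl⟩
      exact (genPrim_sum_bounds hF hp).1
    have h2 : F b - F a ≤ upperDarboux f a b := by
      refine le_csInf hneU ?_
      rintro s ⟨n, p, hp, rfl⟩
      exact (genPrim_sum_bounds hF hp).2
    rw [heq] at hint h1
    linarith
  · intro h
    have hMneg : ∀ t ∈ Set.Icc a b, |(fun t => -f t) t| ≤ M := by
      intro t ht; simpa [abs_neg] using hM t ht
    have hG := h (fun t => lowerDarboux f a t) (isGenPrimitive_lowerDarboux hM)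
    simp only [lowerDarboux_self] at hG
    -- hG : lowerDarboux f a b - 0 = A
    have hgenH : IsGenPrimitive a b f (fun t => -lowerDarboux (fun s => -f s) a t) := by
      intro x hx y hy hxy
      obtain ⟨hl, hr⟩ := isGenPrimitive_lowerDarboux (f := fun s => -f s) hMneg x hx y hy hxy
      simp only [sInf_img_neg, sSup_img_neg] at hl hr
      have hrw : ((fun t => -lowerDarboux (fun s => -f s) a t) y
          - (fun t => -lowerDarboux (fun s => -f s) a t) x) / (y - x)
          = -((lowerDarboux (fun s => -f s) a y - lowerDarboux (fun s => -f s) a x) / (y - x)) := by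
        simp only
        ring
      rw [hrw]
      constructor <;> linarith
    have hH := h _ hgenH
    simp only [lowerDarboux_self] at hH
    -- hH : -lowerDarboux (-f) a b - -0 = A
    have hUD : lowerDarboux (fun s => -f s) a b = -upperDarboux f a b := lowerDarboux_neg f a b
    have hU : upperDarboux f a b = A := by
      rw [hUD] at hH; linarith
    have hL : lowerDarboux f a b = A := by linarith
    exact ⟨⟨⟨M, hM⟩, by rw [hL, hU]⟩, by rw [riemannIntegral, if_pos hab, hL]⟩
end BarrowHelpers
end
end
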